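/- Every multipartite tournament contains a 3-Duke, i.e., a vertex d such that every vertex in a different partite set than d can be reached from d by a directed path of length at most 3. -/
import Mathlib


/-- An orientation of a complete multipartite graph: vertices `V`, partite sets
given as fibers of `part : V → ι`, and `peck` the arc relation. Between any two
vertices in different partite sets there is exactly one arc, and there are no
arcs within a partite set. -/
structure MTour (V : Type*) (ι : Type*) where
  part : V → ι
  peck : V → V → Prop
  complete : ∀ u v, part u ≠ part v → peck u v ∨ peck v u
  inter : ∀ u v, peck u v → part u ≠ part v
  asymm : ∀ u v, peck u v → ¬ peck v u

namespace MTour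

variable {V ι : Type*}

/-- There is a directed path of length at most `m` from `d` to `c`. -/
def hasPath (T : MTour V ι) (m : ℕ) (d c : V) : Prop :=
  ∃ k ≤ m, ∃ f : ℕ → V, f 0 = d ∧ f k = c ∧ ∀ i < k, T.peck (f i) (f (i + 1))

/-- `d` is an `m`-Duke: every vertex in a different partite set is reachable
from `d` by a directed path of length at most `m`. -/
def isDuke (T : MTour V ι) (m : ℕ) (d : V) : Prop :=
  ∀ c, T.part c ≠ T.part d → T.hasPath m d c

/-- `d` is an `m`-King: every other vertex is reachable from `d` by a directed
path of length at most `m`. -/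
def isKing (T : MTour V ι) (m : ℕ) (d : V) : Prop :=
  ∀ c, c ≠ d → T.hasPath m d c

/-- The out-degree of a vertex. -/
noncomputable def outDeg (T : MTour V ι) (v : V) : ℕ :=
  Nat.card {w // T.peck v w}

/-- `e` eclipses `d`: same partite set, `e` pecks everything `d` pecks, and
at least one vertex `d` does not peck. -/
def eclipses (T : MTour V ι) (e d : V) : Prop :=
  T.part e = T.part d ∧ (∀ c, T.peck d c → T.peck e c) ∧ ∃ c, T.peck e c ∧ ¬ T.peck d c

/-- `d` is non-eclipsed: no vertex of its partite set eclipses it. -/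
def nonEclipsed (T : MTour V ι) (d : V) : Prop :=
  ∀ e, ¬ T.eclipses e d

/-- Partite set `i` dominates partite set `j`: some vertex of `i` pecks all of `j`. -/
def Dominates (T : MTour V ι) (i j : ι) : Prop :=
  ∃ v, T.part v = i ∧ ∀ w, T.part w = j → T.peck v w

end MTour

section Aux

variable {V ι : Type*}

/-- The set of vertices reachable from `v` by a path of length 1 or 2. -/
def reach2 (T : MTour V ι) (v : V) : Set V :=
  {x | T.peck v x ∨ ∃ y, T.peck v y ∧ T.peck y x}

lemma path1 (T : MTour V ι) {d c : V} (h : T.peck d c) : T.hasPath 3 d c := by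
  refine ⟨1, by norm_num, fun i => if i = 0 then d else c, by simp, by simp, ?_⟩
  intro i hi
  interval_cases i
  simpa using h

lemma path2 (T : MTour V ι) {d u c : V} (h1 : T.peck d u) (h2 : T.peck u c) :
    T.hasPath 3 d c := by
  refine ⟨2, by norm_num, fun i => if i = 0 then d else if i = 1 then u else c,
    by simp, by simp, ?_⟩
  intro i hi
  interval_cases i <;> simpa

lemma path3 (T : MTour V ι) {d u x c : V} (h1 : T.peck d u) (h2 : T.peck u x)
    (h3 : T.peck x c) : T.hasPath 3 d c := by
  refine ⟨3, le_refl 3,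
    fun i => if i = 0 then d else if i = 1 then u else if i = 2 then x else c,
    by simp, by simp, ?_⟩
  intro i hi
  interval_cases i <;> simpa

end Aux

/-- Every (finite, nonempty) multipartite tournament contains a 3-Duke. -/
theorem stmt4 {V ι : Type*} [Finite V] [Nonempty V] (T : MTour V ι) :
    ∃ d, T.isDuke 3 d := by
  classical
  obtain ⟨d, hd⟩ := Finite.exists_max (fun v => (reach2 T v).ncard)
  refine ⟨d, ?_⟩
  intro c hc
  by_contra hpath
  -- c pecks d
  have hcd : T.peck c d := by
    rcases T.complete c d hc with h | h
    · exact h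
    · exact absurd (path1 T h) hpath
  -- any u pecked by d in a different part than c is pecked by c
  have key1 : ∀ u, T.peck d u → T.part u ≠ T.part c → T.peck c u := by
    intro u hdu hne
    rcases T.complete u c hne with h | h
    · exact absurd (path2 T hdu h) hpath
    · exact h
  -- if d pecks u with part u = part c, then c pecks everything u pecks
  have key2 : ∀ u, T.peck d u → T.part u = T.part c → ∀ x, T.peck u x → T.peck c x := by
    intro u hdu hpart x hux
    have hne : T.part x ≠ T.part c := by
      have := T.inter u x hux
      rw [hpart] at this
      exact fun h => this h.symm
    rcases T.complete x c hne with h | h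
    · exact absurd (path3 T hdu hux h) hpath
    · exact h
  -- reach2 d ⊆ reach2 c
  have hsub : reach2 T d ⊆ reach2 T c := by
    intro x hx
    rcases hx with hdx | ⟨u, hdu, hux⟩
    · exact Or.inr ⟨d, hcd, hdx⟩
    · by_cases hp : T.part u = T.part c
      · exact Or.inl (key2 u hdu hp x hux)
      · exact Or.inr ⟨u, key1 u hdu hp, hux⟩
  -- d ∈ reach2 c but d ∉ reach2 d
  have hdc : d ∈ reach2 T c := Or.inl hcd
  have hdd : d ∉ reach2 T d := by
    rintro (h | ⟨y, h1, h2⟩)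
    · exact T.inter d d h rfl
    · exact T.asymm d y h1 h2
  have hss : reach2 T d ⊂ reach2 T c := ⟨hsub, fun h => hdd (h hdc)⟩
  have : (reach2 T d).ncard < (reach2 T c).ncard :=
    Set.ncard_lt_ncard hss (Set.toFinite _)
  exact absurd (hd c) (not_le.mpr this)
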